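/- Let v be a unit vector orthogonal to the all-ones vector 1 in R^d, and let x = α·v + β·1 with α ≠ 0. Then LayerNorm(x) = √d·v if α > 0 and LayerNorm(x) = -√d·v if α < 0. -/

import Mathlib

/-- For `x = α·v + β·1` with `v` a unit vector orthogonal to the ones vector and `α ≠ 0`,
LayerNorm maps `x` to `√d·v` when `α > 0` and to `-√d·v` when `α < 0`. -/
theorem layerNorm_on_plane (d : ℕ) (hd : 2 ≤ d)
    (v : EuclideanSpace ℝ (Fin d)) (hv : ‖v‖ = 1)
    (hvone : (inner ℝ v (WithLp.toLp 2 (fun _ => 1 : Fin d → ℝ) : EuclideanSpace ℝ (Fin d)) : ℝ) = 0)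
    (α β : ℝ) (hα : α ≠ 0)
    (x : Fin d → ℝ) (hx : x = fun i => α * v i + β)
    (μ σ : ℝ)
    (hμ : μ = (∑ i : Fin d, x i) / d)
    (hσ : σ = Real.sqrt ((∑ i : Fin d, (x i - μ) ^ 2) / d)) :
    (0 < α → ∀ i, (x i - μ) / σ = Real.sqrt d * v i) ∧
    (α < 0 → ∀ i, (x i - μ) / σ = -(Real.sqrt d) * v i) := by
  have hd0 : (0:ℝ) < d := by positivity
  have hdne : (d:ℝ) ≠ 0 := ne_of_gt hd0
  have hsumv : ∑ i : Fin d, v i = 0 := by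
    simpa [PiLp.inner_apply] using hvone
  have hsumsq : ∑ i : Fin d, v i ^ 2 = 1 := by
    have := congrArg (· ^ 2) hv
    rw [EuclideanSpace.norm_eq] at this
    simp only [Real.norm_eq_abs, sq_abs] at this
    rw [Real.sq_sqrt (by positivity)] at this
    simpa using this
  have hμβ : μ = β := by
    rw [hμ, hx]
    simp [Finset.sum_add_distrib, ← Finset.mul_sum, hsumv]
    field_simp
  have hxi : ∀ i, x i - μ = α * v i := by
    intro i; rw [hx, hμβ]; ring
  have hsx : ∑ i : Fin d, (x i - μ) ^ 2 = α ^ 2 := by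
    simp only [hxi, mul_pow, ← Finset.mul_sum, hsumsq, mul_one]
  have hσval : σ = |α| / Real.sqrt d := by
    rw [hσ, hsx, Real.sqrt_div (by positivity), Real.sqrt_sq_eq_abs]
  have hsd : Real.sqrt d ≠ 0 := by positivity
  constructor
  · intro hpos i
    rw [hxi, hσval, abs_of_pos hpos]
    field_simp
  · intro hneg i
    rw [hxi, hσval, abs_of_neg hneg]
    field_simp
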